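/- Let c ∈ M^l be a codeword and v = c + e with Hamming weight ω(e) ≤ t, where t is the largest integer with 2t+1 ≤ 2^l. Then the remainder of v on division by G equals the remainder of e on division by G. In particular, if this remainder is zero then e = 0 and v = c. -/

import Mathlib

set_option synthInstance.maxHeartbeats 1000000
set_option maxHeartbeats 1000000

open MvPolynomial

noncomputable def gI (m : ℕ) (I : Finset (Fin m)) : MvPolynomial (Fin m) (ZMod 2) :=
  ∏ i ∈ I, (X i - 1)

noncomputable def XI (m : ℕ) (I : Finset (Fin m)) : MvPolynomial (Fin m) (ZMod 2) :=
  ∏ i ∈ I, X i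

/-- The ideal (X₁²-1, …, Xₘ²-1). -/
noncomputable def relIdeal (m : ℕ) : Ideal (MvPolynomial (Fin m) (ZMod 2)) :=
  Ideal.span {p | ∃ i : Fin m, p = X i ^ 2 - 1}

/-- The ambient algebra A = F₂[X₁,…,Xₘ]/(X₁²-1,…,Xₘ²-1). -/
abbrev Amb (m : ℕ) := MvPolynomial (Fin m) (ZMod 2) ⧸ relIdeal m

/-- The ideal M of A generated by the images of the Xᵢ - 1. -/
noncomputable def Mideal (m : ℕ) : Ideal (Amb m) :=
  Ideal.span {a | ∃ i : Fin m, a = Ideal.Quotient.mk (relIdeal m) (X i - 1)}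

/-- G = {∏_{i∈I}(Xᵢ-1) : |I| = l}. -/
def Gset (m l : ℕ) : Set (MvPolynomial (Fin m) (ZMod 2)) :=
  {p | ∃ I : Finset (Fin m), I.card = l ∧ p = gI m I}

/-- `IsRemainder m l f r` : r is the remainder of f on division by the Groebner basis
G = {∏_{i∈I}(Xᵢ-1) : |I| = l} (grlex order): f - r ∈ ⟨G⟩ and no term of r is divisible
by any of the leading terms X_I (|I| = l) of the members of G. -/
def IsRemainder (m l : ℕ) (f r : MvPolynomial (Fin m) (ZMod 2)) : Prop :=
  f - r ∈ Ideal.span (Gset m l) ∧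
  ∀ α ∈ r.support, ∀ I : Finset (Fin m), I.card = l → ¬ I ⊆ α.support

variable {m : ℕ}

-- squarefree-reduction of exponents, zeroing variables in I
noncomputable def sqfI (I : Finset (Fin m)) (α : Fin m →₀ ℕ) : Fin m →₀ ℕ :=
  Finsupp.onFinset α.support (fun i => if i ∈ I then 0 else α i % 2) (by
    intro i h
    rw [Finsupp.mem_support_iff]
    intro h0; apply h; simp [h0])

lemma sqfI_apply (I : Finset (Fin m)) (α : Fin m →₀ ℕ) (j : Fin m) :
    sqfI I α j = if j ∈ I then 0 else α j % 2 := rfl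

noncomputable def NI (m : ℕ) (I : Finset (Fin m)) :
    MvPolynomial (Fin m) (ZMod 2) →ₗ[ZMod 2] MvPolynomial (Fin m) (ZMod 2) :=
  AddMonoidAlgebra.mapDomainLinearMap (ZMod 2) (ZMod 2) (sqfI I)

lemma NI_monomial (I : Finset (Fin m)) (α : Fin m →₀ ℕ) (c : ZMod 2) :
    NI m I (monomial α c) = monomial (sqfI I α) c := by
  show AddMonoidAlgebra.mapDomain (sqfI I) (AddMonoidAlgebra.single α c) = _
  rw [AddMonoidAlgebra.mapDomain_single]
  rfl

lemma char2sub (a b : MvPolynomial (Fin m) (ZMod 2)) : a - b = a + b :=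
  CharTwo.sub_eq_add a b

lemma sqfI_insert_eq (I : Finset (Fin m)) (i : Fin m) (hi : i ∉ I) (α : Fin m →₀ ℕ) :
    (α i % 2 = 0 ∧ sqfI I α = sqfI (insert i I) α ∧
      sqfI I (α + Finsupp.single i 1) = sqfI (insert i I) α + Finsupp.single i 1) ∨
    (α i % 2 = 1 ∧ sqfI I (α + Finsupp.single i 1) = sqfI (insert i I) α ∧
      sqfI I α = sqfI (insert i I) α + Finsupp.single i 1) := by
  rcases Nat.mod_two_eq_zero_or_one (α i) with h | h
  · left
    refine ⟨h, ?_, ?_⟩ <;> ext j <;>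
      simp only [sqfI_apply, Finsupp.add_apply, Finsupp.single_apply, Finset.mem_insert] <;>
      split_ifs <;> simp_all <;> omega
  · right
    refine ⟨h, ?_, ?_⟩ <;> ext j <;>
      simp only [sqfI_apply, Finsupp.add_apply, Finsupp.single_apply, Finset.mem_insert] <;>
      split_ifs <;> simp_all <;> omega

lemma NI_mul_gI_monomial (I : Finset (Fin m)) (α : Fin m →₀ ℕ) (c : ZMod 2) :
    NI m ∅ (monomial α c * gI m I) = monomial (sqfI I α) c * gI m I := by
  induction I using Finset.induction_on generalizing α with
  | empty =>
      simp only [gI, Finset.prod_empty, mul_one, NI_monomial]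
  | @insert i I hi ih =>
      have hg : gI m (insert i I) = (X i + 1) * gI m I := by
        rw [gI, Finset.prod_insert hi, CharTwo.sub_eq_add]
        rfl
      have key : ∀ γ : Fin m →₀ ℕ, monomial γ c * ((X i + 1) * gI m I)
          = monomial (γ + Finsupp.single i 1) c * gI m I + monomial γ c * gI m I := by
        intro γ
        rw [monomial_add_single, pow_one]
        ring
      rw [hg, key, map_add, ih, ih, key]
      rcases sqfI_insert_eq I i hi α with ⟨-, h1, h2⟩ | ⟨-, h1, h2⟩
      · rw [h1, h2]
      · rw [h1, h2, add_comm]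

lemma NI_mul_gI (I : Finset (Fin m)) (p : MvPolynomial (Fin m) (ZMod 2)) :
    NI m ∅ (p * gI m I) = NI m I p * gI m I := by
  induction p using MvPolynomial.induction_on' with
  | monomial α c => rw [NI_mul_gI_monomial, NI_monomial]
  | add p q hp hq => rw [add_mul, map_add, hp, hq, map_add, add_mul]

lemma NI_mul_Xsq (i : Fin m) (p : MvPolynomial (Fin m) (ZMod 2)) :
    NI m ∅ (p * X i ^ 2) = NI m ∅ p := by
  induction p using MvPolynomial.induction_on' with
  | monomial α c =>
      rw [← monomial_add_single, NI_monomial, NI_monomial]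
      have hs : sqfI (∅ : Finset (Fin m)) (α + Finsupp.single i 2) = sqfI ∅ α := by
        ext j
        simp only [sqfI_apply, Finsupp.add_apply, Finsupp.single_apply, Finset.notMem_empty,
        if_false]
        split_ifs with hij <;> omega
      rw [hs]
  | add p q hp hq => rw [add_mul, map_add, hp, hq, map_add]

lemma NI_relIdeal {q : MvPolynomial (Fin m) (ZMod 2)} (hq : q ∈ relIdeal m) :
    NI m ∅ q = 0 := by
  have H : ∀ r : MvPolynomial (Fin m) (ZMod 2), NI m ∅ (r * q) = 0 := by
    refine Submodule.span_induction (p := fun x _ => ∀ r, NI m ∅ (r * x) = 0)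
      ?_ ?_ ?_ ?_ hq
    · rintro x ⟨i, rfl⟩ r
      rw [mul_sub, mul_one, map_sub, NI_mul_Xsq, sub_self]
    · intro r; rw [mul_zero, map_zero]
    · intro x y _ _ hx hy r
      rw [mul_add, map_add, hx, hy, add_zero]
    · intro a x _ hx r
      rw [smul_eq_mul, ← mul_assoc, hx]
  rw [← one_mul q]
  exact H 1

lemma NI_squarefree {p : MvPolynomial (Fin m) (ZMod 2)}
    (hp : ∀ α ∈ p.support, ∀ i : Fin m, α i ≤ 1) : NI m ∅ p = p := by
  conv_lhs => rw [p.as_sum]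
  rw [map_sum]
  conv_rhs => rw [p.as_sum]
  refine Finset.sum_congr rfl fun α hα => ?_
  rw [NI_monomial]
  have hs : sqfI (∅ : Finset (Fin m)) α = α := by
    ext j
    simp only [sqfI_apply, Finset.notMem_empty, if_false]
    have := hp α hα j
    omega
  rw [hs]

def BB (m l : ℕ) (S : Finset (Fin m)) : Set (MvPolynomial (Fin m) (ZMod 2)) :=
  {p | ∃ I K : Finset (Fin m), I ⊆ S ∧ K ⊆ S ∧ Disjoint I K ∧ I.card = l ∧
      p = XI m K * gI m I}

lemma monomial_sqf_eq_XI {β : Fin m →₀ ℕ} (hβ : ∀ j, β j ≤ 1) :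
    monomial β (1 : ZMod 2) = XI m β.support := by
  rw [monomial_eq, C_1, one_mul, XI, Finsupp.prod]
  refine Finset.prod_congr rfl fun j hj => ?_
  have h1 : β j = 1 := le_antisymm (hβ j) (Nat.one_le_iff_ne_zero.2 (Finsupp.mem_support_iff.1 hj))
  rw [h1, pow_one]

lemma NI_I_mul_mem {l : ℕ} (I : Finset (Fin m)) (hI : I.card = l)
    (r : MvPolynomial (Fin m) (ZMod 2)) :
    NI m I r * gI m I ∈ Submodule.span (ZMod 2) (BB m l Finset.univ) := by
  induction r using MvPolynomial.induction_on' with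
  | monomial α c =>
      rw [NI_monomial]
      rcases (show c = 0 ∨ c = 1 by revert c; decide) with rfl | rfl
      · rw [monomial_zero, zero_mul]; exact Submodule.zero_mem _
      · set β := sqfI I α with hβdef
        have hβ : ∀ j, β j ≤ 1 := by
          intro j; rw [hβdef, sqfI_apply]; split_ifs <;> omega
        rw [monomial_sqf_eq_XI hβ]
        refine Submodule.subset_span ⟨I, β.support, Finset.subset_univ _,
          Finset.subset_univ _, ?_, hI, rfl⟩
        rw [Finset.disjoint_left]
        intro j hjI hjs
        exact Finsupp.mem_support_iff.1 hjs (by rw [hβdef, sqfI_apply, if_pos hjI])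
  | add p q hp hq =>
      rw [map_add, add_mul]
      exact Submodule.add_mem _ hp hq

lemma NI_spanGset {l : ℕ} {p : MvPolynomial (Fin m) (ZMod 2)}
    (hp : p ∈ Ideal.span (Gset m l)) :
    NI m ∅ p ∈ Submodule.span (ZMod 2) (BB m l Finset.univ) := by
  have H : ∀ r : MvPolynomial (Fin m) (ZMod 2),
      NI m ∅ (r * p) ∈ Submodule.span (ZMod 2) (BB m l Finset.univ) := by
    refine Submodule.span_induction
      (p := fun x _ => ∀ r, NI m ∅ (r * x) ∈ Submodule.span (ZMod 2) (BB m l Finset.univ))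
      ?_ ?_ ?_ ?_ hp
    · rintro x ⟨I, hI, rfl⟩ r
      rw [NI_mul_gI]
      exact NI_I_mul_mem I hI r
    · intro r; rw [mul_zero, map_zero]; exact Submodule.zero_mem _
    · intro x y _ _ hx hy r
      rw [mul_add, map_add]; exact Submodule.add_mem _ (hx r) (hy r)
    · intro a x _ hx r
      rw [smul_eq_mul, ← mul_assoc]; exact hx (r * a)
  rw [← one_mul p]
  exact H 1

lemma BB_subset_span {l : ℕ} (S : Finset (Fin m)) :
    BB m l S ⊆ (Ideal.span (Gset m l) : Set (MvPolynomial (Fin m) (ZMod 2))) := by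
  rintro p ⟨I, K, _, _, _, hI, rfl⟩
  exact Ideal.mul_mem_left _ _ (Ideal.subset_span ⟨I, hI, rfl⟩)

lemma pow_span_le (m l : ℕ) :
    (Ideal.span {p | ∃ i : Fin m, p = X i - 1}) ^ l ≤
      Ideal.span (Gset m l) ⊔ relIdeal m := by
  induction l with
  | zero =>
      intro x _
      have h1 : (1 : MvPolynomial (Fin m) (ZMod 2)) ∈ Ideal.span (Gset m 0) :=
        Ideal.subset_span ⟨∅, Finset.card_empty, by rw [gI, Finset.prod_empty]⟩
      exact Submodule.mem_sup_left (by simpa using Ideal.mul_mem_left _ x h1)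
  | succ l ih =>
      rw [pow_succ]
      rw [Ideal.mul_le]
      intro r hr s hs
      rcases Submodule.mem_sup.1 (ih hr) with ⟨a, ha, b, hb, rfl⟩
      rw [add_mul]
      refine Submodule.add_mem _ ?_ (Submodule.mem_sup_right (Ideal.mul_mem_right s _ hb))
      -- a * s with a ∈ span(Gset l), s ∈ span T
      have key : Ideal.span (Gset m l) * Ideal.span {p | ∃ i : Fin m, p = X i - 1} ≤
          Ideal.span (Gset m (l + 1)) ⊔ relIdeal m := by
        rw [Ideal.span_mul_span, Ideal.span_le]
        rintro x hx
        rw [Set.mem_mul] at hx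
        rcases hx with ⟨g, ⟨I, hI, rfl⟩, t, ⟨i, rfl⟩, hx⟩
        rcases hx with rfl
        by_cases hiI : i ∈ I
        · have hsplit : gI m I = (X i - 1) * gI m (I.erase i) := by
            rw [gI, gI]
            exact (Finset.mul_prod_erase I _ hiI).symm
          have hsq : (X (R := ZMod 2) i - 1) * (X i - 1) = X i ^ 2 - 1 := by
            rw [CharTwo.sub_eq_add, CharTwo.sub_eq_add, CharTwo.add_mul_self]
            ring
          refine Submodule.mem_sup_right ?_
          rw [hsplit, mul_comm ((X i - 1) * gI m (I.erase i)) (X i - 1), ← mul_assoc, hsq]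
          exact Ideal.mul_mem_right _ _ (Ideal.subset_span ⟨i, rfl⟩)
        · refine Submodule.mem_sup_left (Ideal.subset_span ?_)
          exact ⟨insert i I, by rw [Finset.card_insert_of_notMem hiI, hI],
            by rw [gI, gI, Finset.prod_insert hiI, mul_comm]⟩
      exact key (Ideal.mul_mem_mul ha hs)

/-! ### The splitting maps -/

noncomputable def pi0 (i : Fin m) (p : MvPolynomial (Fin m) (ZMod 2)) :
    MvPolynomial (Fin m) (ZMod 2) :=
  AddMonoidAlgebra.ofCoeff (Finsupp.filter (fun α => α i = 0) (AddMonoidAlgebra.coeff p))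

noncomputable def pdiv (i : Fin m) (p : MvPolynomial (Fin m) (ZMod 2)) :
    MvPolynomial (Fin m) (ZMod 2) :=
  AddMonoidAlgebra.mapDomain (fun α => Finsupp.erase i α)
    (AddMonoidAlgebra.ofCoeff (Finsupp.filter (fun α => ¬ α i = 0) (AddMonoidAlgebra.coeff p)))

lemma pi0_add (i : Fin m) (p q : MvPolynomial (Fin m) (ZMod 2)) :
    pi0 i (p + q) = pi0 i p + pi0 i q := by
  rw [pi0, pi0, pi0, AddMonoidAlgebra.coeff_add, Finsupp.filter_add]; rfl

lemma pdiv_add (i : Fin m) (p q : MvPolynomial (Fin m) (ZMod 2)) :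
    pdiv i (p + q) = pdiv i p + pdiv i q := by
  rw [pdiv, pdiv, pdiv, AddMonoidAlgebra.coeff_add, Finsupp.filter_add]
  exact AddMonoidAlgebra.mapDomain_add _ _ _

lemma pi0_zero (i : Fin m) : pi0 i 0 = 0 := by
  rw [pi0, AddMonoidAlgebra.coeff_zero, Finsupp.filter_zero, AddMonoidAlgebra.ofCoeff_zero]
lemma pdiv_zero (i : Fin m) : pdiv i 0 = 0 := by
  rw [pdiv, AddMonoidAlgebra.coeff_zero, Finsupp.filter_zero, AddMonoidAlgebra.ofCoeff_zero,
    AddMonoidAlgebra.mapDomain_zero]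

def noVar (i : Fin m) (p : MvPolynomial (Fin m) (ZMod 2)) : Prop :=
  ∀ α ∈ p.support, α i = 0

lemma X_mul_eq_mapDomain (i : Fin m) (p : MvPolynomial (Fin m) (ZMod 2)) :
    X i * p = AddMonoidAlgebra.mapDomain (fun α => α + Finsupp.single i 1) p := by
  induction p using MvPolynomial.induction_on' with
  | monomial α c =>
      show X i * monomial α c = AddMonoidAlgebra.mapDomain _ (AddMonoidAlgebra.single α c)
      rw [AddMonoidAlgebra.mapDomain_single]
      show X i * monomial α c = monomial (α + Finsupp.single i 1) c
      rw [add_comm α, monomial_single_add, pow_one]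
  | add p q hp hq =>
      rw [mul_add, hp, hq, AddMonoidAlgebra.mapDomain_add]

lemma pi0_of_noVar {i : Fin m} {p : MvPolynomial (Fin m) (ZMod 2)} (h : noVar i p) :
    pi0 i p = p := by
  rw [pi0]
  congr 1
  rw [Finsupp.filter_eq_self_iff]
  intro α hα
  exact h α (Finsupp.mem_support_iff.2 hα)

lemma filterne_of_noVar {i : Fin m} {p : MvPolynomial (Fin m) (ZMod 2)} (h : noVar i p) :
    Finsupp.filter (fun α => ¬ α i = 0) (AddMonoidAlgebra.coeff p) = 0 := by
  rw [Finsupp.filter_eq_zero_iff]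
  intro α hα
  by_contra hne
  exact hα (h α (Finsupp.mem_support_iff.2 hne))

lemma pdiv_of_noVar {i : Fin m} {p : MvPolynomial (Fin m) (ZMod 2)} (h : noVar i p) :
    pdiv i p = 0 := by
  rw [pdiv, filterne_of_noVar h, AddMonoidAlgebra.ofCoeff_zero, AddMonoidAlgebra.mapDomain_zero]

lemma filterne_X_mul_of_noVar {i : Fin m} {p : MvPolynomial (Fin m) (ZMod 2)} (h : noVar i p) :
    Finsupp.filter (fun α => ¬ α i = 0) (AddMonoidAlgebra.coeff (X i * p))
      = AddMonoidAlgebra.coeff (X i * p) := by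
  rw [Finsupp.filter_eq_self_iff]
  intro α hα
  rw [X_mul_eq_mapDomain] at hα
  change Finsupp.mapDomain _ (AddMonoidAlgebra.coeff p) α ≠ 0 at hα
  intro h0
  apply hα
  apply Finsupp.mapDomain_notin_range
  rintro ⟨β, rfl⟩
  simp at h0

lemma pi0_X_mul_of_noVar {i : Fin m} {p : MvPolynomial (Fin m) (ZMod 2)} (h : noVar i p) :
    pi0 i (X i * p) = 0 := by
  have := Finsupp.filter_pos_add_filter_neg (p := fun α : Fin m →₀ ℕ => α i = 0)
    (AddMonoidAlgebra.coeff (X i * p))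
  have h2 := filterne_X_mul_of_noVar h
  rw [h2] at this
  have h3 := add_right_cancel (b := AddMonoidAlgebra.coeff (X i * p))
    (this.trans (zero_add _).symm)
  rw [pi0, h3, AddMonoidAlgebra.ofCoeff_zero]

lemma pdiv_X_mul_of_noVar {i : Fin m} {p : MvPolynomial (Fin m) (ZMod 2)} (h : noVar i p) :
    pdiv i (X i * p) = p := by
  rw [pdiv, filterne_X_mul_of_noVar h, AddMonoidAlgebra.ofCoeff_coeff, X_mul_eq_mapDomain]
  apply AddMonoidAlgebra.coeff_injective
  show Finsupp.mapDomain (fun α => Finsupp.erase i α)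
    (Finsupp.mapDomain (fun α => α + Finsupp.single i 1) (AddMonoidAlgebra.coeff p)) = _
  rw [← Finsupp.mapDomain_comp]
  rw [Finsupp.mapDomain_congr (g := id), Finsupp.mapDomain_id]
  intro α hα
  have hα0 : α i = 0 := h α hα
  ext j
  by_cases hj : j = i
  · subst hj; simp [Finsupp.erase_same, hα0]
  · simp [Function.comp, Finsupp.erase_ne hj, Finsupp.single_apply, Ne.symm hj]

lemma eq_pi0_add_X_mul_pdiv {i : Fin m} {e : MvPolynomial (Fin m) (ZMod 2)}
    (he : ∀ α ∈ e.support, ∀ j : Fin m, α j ≤ 1) :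
    e = pi0 i e + X i * pdiv i e := by
  have hsplit := Finsupp.filter_pos_add_filter_neg (p := fun α : Fin m →₀ ℕ => α i = 0)
    (AddMonoidAlgebra.coeff e)
  have hX : AddMonoidAlgebra.coeff (X i * pdiv i e)
      = Finsupp.filter (fun α => ¬ α i = 0) (AddMonoidAlgebra.coeff e) := by
    rw [pdiv, X_mul_eq_mapDomain]
    show Finsupp.mapDomain (fun α => α + Finsupp.single i 1)
      (Finsupp.mapDomain (fun α => Finsupp.erase i α)
        (Finsupp.filter (fun α => ¬ α i = 0) (AddMonoidAlgebra.coeff e))) = _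
    rw [← Finsupp.mapDomain_comp]
    rw [Finsupp.mapDomain_congr (g := id), Finsupp.mapDomain_id]
    intro α hα
    rw [Finsupp.support_filter, Finset.mem_filter] at hα
    have h1 : α i = 1 := le_antisymm (he α hα.1 i) (Nat.one_le_iff_ne_zero.2 hα.2)
    ext j
    by_cases hj : j = i
    · subst hj
      simp [Function.comp, Finsupp.erase_same, h1]
    · simp [Function.comp, Finsupp.erase_ne hj, Finsupp.single_apply, Ne.symm hj]
  apply AddMonoidAlgebra.coeff_injective
  rw [AddMonoidAlgebra.coeff_add, hX]
  exact hsplit.symm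

lemma card_split {i : Fin m} {e : MvPolynomial (Fin m) (ZMod 2)}
    (he : ∀ α ∈ e.support, ∀ j : Fin m, α j ≤ 1) :
    e.support.card = (pi0 i e).support.card + (pdiv i e).support.card := by
  classical
  have h0 : (pi0 i e).support = {x ∈ e.support | x i = 0} := Finsupp.support_filter _ _
  have h1 : (Finsupp.filter (fun α : Fin m →₀ ℕ => ¬ α i = 0) (AddMonoidAlgebra.coeff e)).support
      = {x ∈ e.support | ¬ x i = 0} := Finsupp.support_filter _ _
  have hinj : Set.InjOn (fun α : Fin m →₀ ℕ => Finsupp.erase i α)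
      ((Finsupp.filter (fun α : Fin m →₀ ℕ => ¬ α i = 0) (AddMonoidAlgebra.coeff e)).support : Set (Fin m →₀ ℕ)) := by
    intro α hα β hβ hab
    rw [h1] at hα hβ
    simp only [Finset.coe_filter, Set.mem_setOf_eq] at hα hβ
    have hα1 : α i = 1 := le_antisymm (he α hα.1 i) (Nat.one_le_iff_ne_zero.2 hα.2)
    have hβ1 : β i = 1 := le_antisymm (he β hβ.1 i) (Nat.one_le_iff_ne_zero.2 hβ.2)
    ext j
    by_cases hj : j = i
    · subst hj; rw [hα1, hβ1]
    · have := congrArg (fun f => f j) hab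
      simpa [Finsupp.erase_ne hj] using this
  have h2 : (pdiv i e).support.card
      = (Finsupp.filter (fun α : Fin m →₀ ℕ => ¬ α i = 0) (AddMonoidAlgebra.coeff e)).support.card := by
    rw [pdiv]
    show (Finsupp.mapDomain (fun α => Finsupp.erase i α)
      (Finsupp.filter (fun α => ¬ α i = 0) (AddMonoidAlgebra.coeff e))).support.card = _
    rw [Finsupp.mapDomain_support_of_injOn _ hinj, Finset.card_image_of_injOn]
    exact hinj
  rw [h2]
  show e.support.card = _
  rw [h0, h1]
  exact (Finset.card_filter_add_card_filter_not (p := fun α : Fin m →₀ ℕ => α i = 0)).symm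

lemma noVar_mul {i : Fin m} {p q : MvPolynomial (Fin m) (ZMod 2)}
    (hp : noVar i p) (hq : noVar i q) : noVar i (p * q) := by
  classical
  intro α hα
  have := MvPolynomial.support_mul p q hα
  rcases Finset.mem_add.1 this with ⟨β, hβ, γ, hγ, rfl⟩
  rw [Finsupp.add_apply, hp β hβ, hq γ hγ]

lemma noVar_one (i : Fin m) : noVar i (1 : MvPolynomial (Fin m) (ZMod 2)) := by
  intro α hα
  classical
  have h1 : (1 : MvPolynomial (Fin m) (ZMod 2)) = monomial 0 1 := by
    rw [monomial_zero', C_1]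
  rw [h1, support_monomial] at hα
  rw [if_neg one_ne_zero] at hα
  rw [Finset.mem_singleton] at hα
  subst hα
  rfl

lemma noVar_X {i j : Fin m} (h : j ≠ i) : noVar i (X (R := ZMod 2) j) := by
  intro α hα
  rw [support_X] at hα
  rw [Finset.mem_singleton] at hα
  subst hα
  exact Finsupp.single_eq_of_ne' h

lemma noVar_Xsub1 {i j : Fin m} (h : j ≠ i) :
    noVar i (X (R := ZMod 2) j - 1) := by
  intro α hα
  rw [CharTwo.sub_eq_add] at hα
  have := MvPolynomial.support_add hα
  rcases Finset.mem_union.1 this with h1 | h1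
  · exact noVar_X h α h1
  · exact noVar_one i α h1

lemma noVar_XI {i : Fin m} {K : Finset (Fin m)} (h : i ∉ K) :
    noVar i (XI m K) := by
  classical
  induction K using Finset.induction_on with
  | empty => exact noVar_one i
  | @insert j K hj ih =>
      rw [XI, Finset.prod_insert hj]
      exact noVar_mul (noVar_X (fun hji => h (hji ▸ Finset.mem_insert_self j K)))
        (ih (fun hiK => h (Finset.mem_insert_of_mem hiK)))

lemma noVar_gI {i : Fin m} {I : Finset (Fin m)} (h : i ∉ I) :
    noVar i (gI m I) := by
  classical
  induction I using Finset.induction_on with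
  | empty => exact noVar_one i
  | @insert j K hj ih =>
      rw [gI, Finset.prod_insert hj]
      exact noVar_mul (noVar_Xsub1 (fun hji => h (hji ▸ Finset.mem_insert_self j K)))
        (ih (fun hiK => h (Finset.mem_insert_of_mem hiK)))

lemma BB_down {l : ℕ} {S : Finset (Fin m)} {p : MvPolynomial (Fin m) (ZMod 2)}
    (hp : p ∈ BB m (l + 1) S) : p ∈ Submodule.span (ZMod 2) (BB m l S) := by
  classical
  obtain ⟨I, K, hIS, hKS, hIK, hI, rfl⟩ := hp
  have hne : I.Nonempty := Finset.card_pos.1 (by omega)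
  obtain ⟨j, hj⟩ := hne
  have hsplit : gI m I = (X j + 1) * gI m (I.erase j) := by
    rw [gI, gI, ← CharTwo.sub_eq_add]
    exact (Finset.mul_prod_erase I _ hj).symm
  have hdecomp : XI m K * gI m I
      = XI m (insert j K) * gI m (I.erase j) + XI m K * gI m (I.erase j) := by
    rw [hsplit]
    have hXIins : XI m (insert j K) = X j * XI m K := by
      rw [XI, XI, Finset.prod_insert (fun hjK => (Finset.disjoint_left.1 hIK hj) hjK)]
    rw [hXIins]
    ring
  rw [hdecomp]
  have hjK : j ∉ K := Finset.disjoint_left.1 hIK hj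
  refine Submodule.add_mem _ (Submodule.subset_span ?_) (Submodule.subset_span ?_)
  · exact ⟨I.erase j, insert j K, (Finset.erase_subset _ _).trans hIS,
      Finset.insert_subset (hIS hj) hKS,
      by rw [Finset.disjoint_left]
         intro x hx
         rw [Finset.mem_insert]
         rintro (rfl | hxK)
         · exact (Finset.notMem_erase _ I) hx
         · exact Finset.disjoint_left.1 hIK (Finset.mem_of_mem_erase hx) hxK,
      by rw [Finset.card_erase_of_mem hj, hI]; rfl, rfl⟩
  · exact ⟨I.erase j, K, (Finset.erase_subset _ _).trans hIS, hKS,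
      Finset.disjoint_of_subset_left (Finset.erase_subset _ _) hIK,
      by rw [Finset.card_erase_of_mem hj, hI]; rfl, rfl⟩

lemma SD {l : ℕ} {S : Finset (Fin m)} {i : Fin m} (hiS : i ∈ S)
    {x : MvPolynomial (Fin m) (ZMod 2)}
    (hx : x ∈ Submodule.span (ZMod 2) (BB m (l + 1) S)) :
    pi0 i x + pdiv i x ∈ Submodule.span (ZMod 2) (BB m (l + 1) (S.erase i)) ∧
    pdiv i x ∈ Submodule.span (ZMod 2) (BB m l (S.erase i)) := by
  classical
  refine Submodule.span_induction (p := fun x _ =>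
      pi0 i x + pdiv i x ∈ Submodule.span (ZMod 2) (BB m (l + 1) (S.erase i)) ∧
      pdiv i x ∈ Submodule.span (ZMod 2) (BB m l (S.erase i))) ?_ ?_ ?_ ?_ hx
  · rintro g ⟨I, K, hIS, hKS, hIK, hI, rfl⟩
    by_cases hiI : i ∈ I
    · -- g = X i * h + h with h = XI K * gI (I.erase i)
      set h := XI m K * gI m (I.erase i) with hh
      have hiK : i ∉ K := Finset.disjoint_left.1 hIK hiI
      have hnv : noVar i h := noVar_mul (noVar_XI hiK) (noVar_gI (Finset.notMem_erase i I))
      have hg : XI m K * gI m I = X i * h + h := by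
        rw [hh, gI, gI]
        rw [show (∏ k ∈ I, (X k - 1) : MvPolynomial (Fin m) (ZMod 2))
            = (X i - 1) * ∏ k ∈ I.erase i, (X k - 1) from (Finset.mul_prod_erase I _ hiI).symm]
        rw [CharTwo.sub_eq_add]
        ring
      have hpi0 : pi0 i (XI m K * gI m I) = h := by
        rw [hg, pi0_add, pi0_X_mul_of_noVar hnv, pi0_of_noVar hnv, zero_add]
      have hpdiv : pdiv i (XI m K * gI m I) = h := by
        rw [hg, pdiv_add, pdiv_X_mul_of_noVar hnv, pdiv_of_noVar hnv, add_zero]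
      constructor
      · rw [hpi0, hpdiv, CharTwo.add_self_eq_zero]
        exact Submodule.zero_mem _
      · rw [hpdiv, hh]
        refine Submodule.subset_span ⟨I.erase i, K, ?_, ?_, ?_, ?_, rfl⟩
        · intro x hx
          exact Finset.mem_erase.2 ⟨Finset.ne_of_mem_erase hx, hIS (Finset.mem_of_mem_erase hx)⟩
        · exact Finset.subset_erase.2 ⟨hKS, hiK⟩
        · exact Finset.disjoint_of_subset_left (Finset.erase_subset _ _) hIK
        · rw [Finset.card_erase_of_mem hiI, hI]
          rfl
    · by_cases hiK : i ∈ K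
      · -- g = X i * h, h = XI (K.erase i) * gI I
        set h := XI m (K.erase i) * gI m I with hh
        have hnv : noVar i h := noVar_mul (noVar_XI (Finset.notMem_erase i K)) (noVar_gI hiI)
        have hg : XI m K * gI m I = X i * h := by
          rw [hh, XI, XI]
          rw [show (∏ k ∈ K, (X k : MvPolynomial (Fin m) (ZMod 2)))
              = X i * ∏ k ∈ K.erase i, X k from (Finset.mul_prod_erase K _ hiK).symm]
          ring
        have hmem : h ∈ BB m (l + 1) (S.erase i) :=
          ⟨I, K.erase i, Finset.subset_erase.2 ⟨hIS, hiI⟩,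
            (fun x hx => Finset.mem_erase.2
              ⟨Finset.ne_of_mem_erase hx, hKS (Finset.mem_of_mem_erase hx)⟩),
            Finset.disjoint_of_subset_right (Finset.erase_subset _ _) hIK, hI, rfl⟩
        constructor
        · rw [hg, pi0_X_mul_of_noVar hnv, pdiv_X_mul_of_noVar hnv, zero_add]
          exact Submodule.subset_span hmem
        · rw [hg, pdiv_X_mul_of_noVar hnv]
          exact BB_down hmem
      · have hnv : noVar i (XI m K * gI m I) := noVar_mul (noVar_XI hiK) (noVar_gI hiI)
        rw [pi0_of_noVar hnv, pdiv_of_noVar hnv, add_zero]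
        refine ⟨Submodule.subset_span ⟨I, K, Finset.subset_erase.2 ⟨hIS, hiI⟩,
          Finset.subset_erase.2 ⟨hKS, hiK⟩, hIK, hI, rfl⟩, Submodule.zero_mem _⟩
  · constructor
    · show pi0 i 0 + pdiv i 0 ∈ _
      rw [pi0_zero, pdiv_zero, add_zero]
      exact Submodule.zero_mem _
    · show pdiv i 0 ∈ _
      rw [pdiv_zero]
      exact Submodule.zero_mem _
  · intro x y _ _ hx hy
    constructor
    · show pi0 i (x + y) + pdiv i (x + y) ∈ _
      rw [pi0_add, pdiv_add]
      have hre : pi0 i x + pi0 i y + (pdiv i x + pdiv i y)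
          = (pi0 i x + pdiv i x) + (pi0 i y + pdiv i y) := by ring
      rw [hre]
      exact Submodule.add_mem _ hx.1 hy.1
    · show pdiv i (x + y) ∈ _
      rw [pdiv_add]
      exact Submodule.add_mem _ hx.2 hy.2
  · intro a x _ hx
    rcases (show a = 0 ∨ a = 1 by revert a; decide) with rfl | rfl
    · constructor
      · show pi0 i ((0 : ZMod 2) • x) + pdiv i ((0 : ZMod 2) • x) ∈ _
        rw [zero_smul, pi0_zero, pdiv_zero, add_zero]
        exact Submodule.zero_mem _
      · show pdiv i ((0 : ZMod 2) • x) ∈ _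
        rw [zero_smul, pdiv_zero]
        exact Submodule.zero_mem _
    · constructor
      · show pi0 i ((1 : ZMod 2) • x) + pdiv i ((1 : ZMod 2) • x) ∈ _
        rw [one_smul]
        exact hx.1
      · show pdiv i ((1 : ZMod 2) • x) ∈ _
        rw [one_smul]
        exact hx.2

lemma erase_le_apply {i : Fin m} {β : Fin m →₀ ℕ} (j : Fin m) :
    (Finsupp.erase i β) j ≤ β j := by
  by_cases hj : j = i
  · subst hj; rw [Finsupp.erase_same]; exact Nat.zero_le _
  · rw [Finsupp.erase_ne hj]

lemma mindist (S : Finset (Fin m)) : ∀ (l : ℕ) (e : MvPolynomial (Fin m) (ZMod 2)),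
    e ∈ Submodule.span (ZMod 2) (BB m l S) →
    (∀ α ∈ e.support, ∀ i : Fin m, α i ≤ 1) → e ≠ 0 → 2 ^ l ≤ e.support.card := by
  classical
  induction S using Finset.strongInduction with
  | _ S IH =>
    intro l e hspan hsq hne
    match l with
    | 0 =>
        simpa using Finset.card_pos.2 (support_nonempty.2 hne)
    | Nat.succ l =>
      rcases S.eq_empty_or_nonempty with rfl | ⟨i, hi⟩
      · exfalso
        apply hne
        have hBB : BB m (l + 1) (∅ : Finset (Fin m)) = ∅ := by
          ext p
          simp only [BB, Set.mem_setOf_eq, Set.mem_empty_iff_false, iff_false]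
          rintro ⟨I, K, hIS, -, -, hI, -⟩
          have hc := Finset.card_le_card hIS
          rw [hI, Finset.card_empty] at hc
          omega
        rw [hBB, Submodule.span_empty, Submodule.mem_bot] at hspan
        exact hspan
      · obtain ⟨h1, h2⟩ := SD hi hspan
        have hcard := card_split (i := i) hsq
        have hS' : S.erase i ⊂ S := Finset.erase_ssubset hi
        have hsuppa : (pi0 i e).support = {x ∈ e.support | x i = 0} :=
          Finsupp.support_filter _ _
        have hsq_a : ∀ α ∈ (pi0 i e).support, ∀ j : Fin m, α j ≤ 1 := by
          intro α hα
          rw [hsuppa, Finset.mem_filter] at hα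
          exact hsq α hα.1
        have hsq_b : ∀ α ∈ (pdiv i e).support, ∀ j : Fin m, α j ≤ 1 := by
          intro α hα j
          have hα' := Finsupp.mapDomain_support (f := fun α : Fin m →₀ ℕ => Finsupp.erase i α)
              (s := Finsupp.filter (fun α : Fin m →₀ ℕ => ¬ α i = 0) (AddMonoidAlgebra.coeff e))
              (by exact hα)
          rcases Finset.mem_image.1 hα' with ⟨β, hβ, rfl⟩
          have hβe : β ∈ e.support := by
            have := Finsupp.support_filter (fun α : Fin m →₀ ℕ => ¬ α i = 0) (AddMonoidAlgebra.coeff e) ▸ hβ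
            exact (Finset.mem_filter.1 this).1
          exact le_trans (erase_le_apply j) (hsq β hβe j)
        by_cases hab : pi0 i e + pdiv i e = 0
        · have hba : pi0 i e = pdiv i e := by
            have : pi0 i e = - pdiv i e := eq_neg_of_add_eq_zero_left hab
            rwa [CharTwo.neg_eq] at this
          by_cases hb : pdiv i e = 0
          · exfalso
            apply hne
            rw [eq_pi0_add_X_mul_pdiv (i := i) hsq, hb, hba.trans hb, mul_zero, add_zero]
          · have hwb := IH _ hS' l (pdiv i e) h2 hsq_b hb
            have hca : (pi0 i e).support.card = (pdiv i e).support.card := by rw [hba]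
            rw [pow_succ]
            omega
        · have hsq_ab : ∀ α ∈ (pi0 i e + pdiv i e).support, ∀ j : Fin m, α j ≤ 1 := by
            intro α hα
            rcases Finset.mem_union.1 (MvPolynomial.support_add hα) with h | h
            · exact hsq_a α h
            · exact hsq_b α h
          have hw := IH _ hS' (l + 1) _ h1 hsq_ab hab
          have hle : (pi0 i e + pdiv i e).support.card
              ≤ (pi0 i e).support.card + (pdiv i e).support.card :=
            le_trans (Finset.card_le_card (MvPolynomial.support_add)) (Finset.card_union_le _ _)
          omega

lemma Mideal_eq_map (m : ℕ) :
    Mideal m = Ideal.map (Ideal.Quotient.mk (relIdeal m))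
      (Ideal.span {p : MvPolynomial (Fin m) (ZMod 2) | ∃ i : Fin m, p = X i - 1}) := by
  have hset : (Ideal.Quotient.mk (relIdeal m)) '' {p | ∃ i : Fin m, p = X i - 1}
      = {a | ∃ i : Fin m, a = Ideal.Quotient.mk (relIdeal m) (X i - 1)} := by
    ext a
    constructor
    · rintro ⟨p, ⟨i, rfl⟩, rfl⟩
      exact ⟨i, rfl⟩
    · rintro ⟨i, rfl⟩
      exact ⟨X i - 1, ⟨i, rfl⟩, rfl⟩
  rw [Ideal.map_span, hset, Mideal]

lemma c_mem_sup {l : ℕ} {c : MvPolynomial (Fin m) (ZMod 2)}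
    (hcM : Ideal.Quotient.mk (relIdeal m) c ∈ Mideal m ^ l) :
    c ∈ Ideal.span (Gset m l) ⊔ relIdeal m := by
  rw [Mideal_eq_map, ← Ideal.map_pow] at hcM
  obtain ⟨x, hx, hmk⟩ := (Ideal.mem_map_iff_of_surjective _ Ideal.Quotient.mk_surjective).1 hcM
  have hxc : x - c ∈ relIdeal m := Ideal.Quotient.eq.1 hmk
  have hxs : x ∈ Ideal.span (Gset m l) ⊔ relIdeal m := pow_span_le m l hx
  have : c = x - (x - c) := by ring
  rw [this]
  exact Submodule.sub_mem _ hxs (Submodule.mem_sup_right hxc)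

lemma c_mem_span {l : ℕ} {c : MvPolynomial (Fin m) (ZMod 2)}
    (hc : ∀ α ∈ c.support, ∀ i : Fin m, α i ≤ 1)
    (hcM : Ideal.Quotient.mk (relIdeal m) c ∈ Mideal m ^ l) :
    c ∈ Ideal.span (Gset m l) := by
  obtain ⟨a, ha, b, hb, hab⟩ := Submodule.mem_sup.1 (c_mem_sup hcM)
  have hNc : NI m ∅ c = c := NI_squarefree hc
  have : c = NI m ∅ a := by
    rw [← hNc, ← hab, map_add, NI_relIdeal hb, add_zero]
  rw [this]
  have hmem := NI_spanGset (l := l) ha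
  have hle : Submodule.span (ZMod 2) (BB m l Finset.univ)
      ≤ (Ideal.span (Gset m l)).restrictScalars (ZMod 2) :=
    Submodule.span_le.2 (BB_subset_span _)
  exact hle hmem

lemma e_mem_BBspan {l : ℕ} {e : MvPolynomial (Fin m) (ZMod 2)}
    (he : ∀ α ∈ e.support, ∀ i : Fin m, α i ≤ 1)
    (hespan : e ∈ Ideal.span (Gset m l)) :
    e ∈ Submodule.span (ZMod 2) (BB m l Finset.univ) := by
  have := NI_spanGset (l := l) hespan
  rwa [NI_squarefree he] at this

/-- if v = c + e with c ∈ Mˡ and ω(e) ≤ t (t the largest integer with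
2t+1 ≤ 2ˡ), then the remainder of v mod G equals the remainder of e mod G; in
particular if that remainder is zero then e = 0 and v = c. -/
theorem stmt15 (m l t : ℕ) (hl1 : 1 ≤ l) (hlm : l ≤ m)
    (ht : 2 * t + 1 ≤ 2 ^ l ∧ ∀ s : ℕ, 2 * s + 1 ≤ 2 ^ l → s ≤ t)
    (c e v : MvPolynomial (Fin m) (ZMod 2))
    (hc : ∀ α ∈ c.support, ∀ i : Fin m, α i ≤ 1)
    (he : ∀ α ∈ e.support, ∀ i : Fin m, α i ≤ 1)
    (hcM : Ideal.Quotient.mk (relIdeal m) c ∈ Mideal m ^ l)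
    (hv : v = c + e) (hew : e.support.card ≤ t) :
    (∀ r : MvPolynomial (Fin m) (ZMod 2), IsRemainder m l v r ↔ IsRemainder m l e r) ∧
    (IsRemainder m l v 0 → e = 0 ∧ v = c) := by
  classical
  have hcspan : c ∈ Ideal.span (Gset m l) := c_mem_span hc hcM
  have hiff : ∀ r : MvPolynomial (Fin m) (ZMod 2), IsRemainder m l v r ↔ IsRemainder m l e r := by
    intro r
    have hvr : v - r = c + (e - r) := by rw [hv]; ring
    constructor
    · rintro ⟨hm, hterm⟩
      refine ⟨?_, hterm⟩
      rw [hvr] at hm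
      have h2 : e - r = (c + (e - r)) - c := by ring
      rw [h2]
      exact Submodule.sub_mem _ hm hcspan
    · rintro ⟨hm, hterm⟩
      refine ⟨?_, hterm⟩
      rw [hvr]
      exact Submodule.add_mem _ hcspan hm
  refine ⟨hiff, ?_⟩
  intro h0
  have he0 : IsRemainder m l e 0 := (hiff 0).1 h0
  have hespan : e ∈ Ideal.span (Gset m l) := by
    have := he0.1
    rwa [sub_zero] at this
  have heBB := e_mem_BBspan he hespan
  have hezero : e = 0 := by
    by_contra hne
    have := mindist Finset.univ l e heBB he hne
    omega
  exact ⟨hezero, by rw [hv, hezero, add_zero]⟩
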